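/- A permutation test p-value is valid: if T, T₁,…,T_B are exchangeable real-valued random variables, then for any α ∈ (0,1), P( (1 + #{i : Tᵢ ≥ T})/(B+1) ≤ α ) ≤ α. -/

import Mathlib

open MeasureTheory Finset
open scoped ENNReal

noncomputable def pcount {n : ℕ} (x : Fin n → ℝ) (j : Fin n) : ℕ :=
  (Finset.univ.filter fun i => x j ≤ x i).card

lemma pcount_zero {B : ℕ} (x : Fin (B + 1) → ℝ) :
    pcount x 0 = 1 + (Finset.univ.filter fun i : Fin B => x 0 ≤ x i.succ).card := by
  rw [pcount, Fin.univ_succ, Finset.filter_cons, if_pos le_rfl, Finset.card_cons,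
    Finset.filter_map, Finset.card_map, add_comm]
  rfl

lemma pcount_perm {n : ℕ} (x : Fin n → ℝ) (σ : Equiv.Perm (Fin n)) (j : Fin n) :
    pcount (x ∘ σ) j = pcount x (σ j) := by
  unfold pcount
  apply Finset.card_nbij' σ σ.symm <;> simp [Set.MapsTo, Set.LeftInvOn, Set.RightInvOn]

lemma pcount_bound {n : ℕ} (x : Fin n → ℝ) (c : ℝ) (hc : 0 ≤ c) :
    ((Finset.univ.filter fun j => ((pcount x j : ℝ) ≤ c)).card : ℝ) ≤ c := by
  set s := Finset.univ.filter fun j => ((pcount x j : ℝ) ≤ c) with hs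
  rcases s.eq_empty_or_nonempty with h | h
  · simp [h, hc]
  · obtain ⟨j, hjs, hjmin⟩ := s.exists_min_image x h
    have hsub : s ⊆ Finset.univ.filter fun i => x j ≤ x i := by
      intro k hk
      simp only [Finset.mem_filter, Finset.mem_univ, true_and]
      exact hjmin k hk
    have h1 : (s.card : ℝ) ≤ (pcount x j : ℝ) := by
      exact_mod_cast Finset.card_le_card hsub
    have h2 : (pcount x j : ℝ) ≤ c := by
      simpa [hs] using (Finset.mem_filter.mp hjs).2
    linarith

lemma pcount_measurable {n : ℕ} (j : Fin n) :
    Measurable fun x : Fin n → ℝ => (pcount x j : ℝ) := by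
  have : (fun x : Fin n → ℝ => (pcount x j : ℝ)) =
      fun x => ∑ i : Fin n, if x j ≤ x i then (1 : ℝ) else 0 := by
    funext x
    rw [pcount, Finset.card_filter]
    push_cast
    rfl
  rw [this]
  apply Finset.measurable_sum
  intro i _
  exact Measurable.ite (measurableSet_le (measurable_pi_apply j) (measurable_pi_apply i))
    measurable_const measurable_const

theorem stmt_12 {Ω : Type*} [MeasureSpace Ω] [IsProbabilityMeasure (volume : Measure Ω)]
    {B : ℕ} (T : Ω → ℝ) (Ts : Fin B → Ω → ℝ)
    (W : Fin (B + 1) → Ω → ℝ) (hW : W = Fin.cons T Ts)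
    (hmeas : ∀ i, Measurable (W i))
    (hexch : ∀ σ : Equiv.Perm (Fin (B + 1)),
      Measure.map (fun ω (j : Fin (B + 1)) => W (σ j) ω) (volume : Measure Ω) =
      Measure.map (fun ω (j : Fin (B + 1)) => W j ω) (volume : Measure Ω))
    (α : ℝ) (hα0 : 0 < α) (hα1 : α < 1) :
    (volume : Measure Ω) {ω |
        (1 + ((Finset.univ.filter fun i => T ω ≤ Ts i ω).card : ℝ)) / (B + 1) ≤ α}
      ≤ ENNReal.ofReal α := by
  classical
  set μ : Measure Ω := volume with hμ
  set c : ℝ := α * (B + 1) with hc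
  have hc0 : 0 ≤ c := by positivity
  set F : Ω → (Fin (B + 1) → ℝ) := fun ω i => W i ω with hF
  have hFmeas : Measurable F := measurable_pi_lambda _ hmeas
  set S : Fin (B + 1) → Set (Fin (B + 1) → ℝ) :=
    fun j => {x | (pcount x j : ℝ) ≤ c} with hSdef
  have hS : ∀ j, MeasurableSet (S j) := fun j =>
    measurableSet_le (pcount_measurable j) measurable_const
  -- rewrite the event
  have hev : {ω |
        (1 + ((Finset.univ.filter fun i => T ω ≤ Ts i ω).card : ℝ)) / (B + 1) ≤ α}
      = F ⁻¹' (S 0) := by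
    ext ω
    have hB1 : (0 : ℝ) < (B : ℝ) + 1 := by positivity
    simp only [Set.mem_setOf_eq, Set.mem_preimage, hSdef]
    rw [div_le_iff₀ hB1]
    have hcnt : (pcount (F ω) 0 : ℝ) =
        1 + ((Finset.univ.filter fun i => T ω ≤ Ts i ω).card : ℝ) := by
      rw [pcount_zero]
      push_cast
      simp [hF, hW]
    rw [hcnt, hc]
  rw [hev]
  -- all indices give the same probability
  have hμeq : ∀ j, μ (F ⁻¹' S j) = μ (F ⁻¹' S 0) := by
    intro j
    set σ : Equiv.Perm (Fin (B + 1)) := Equiv.swap 0 j with hσ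
    have hGmeas : Measurable (fun ω (k : Fin (B + 1)) => W (σ k) ω) :=
      measurable_pi_lambda _ fun k => hmeas (σ k)
    have h1 : (fun ω (k : Fin (B + 1)) => W (σ k) ω) ⁻¹' (S j) = F ⁻¹' (S 0) := by
      ext ω
      have h2 : (fun k : Fin (B + 1) => W (σ k) ω) = (F ω) ∘ σ := rfl
      have hσj : σ j = 0 := Equiv.swap_apply_right 0 j
      simp only [Set.mem_preimage, hSdef, Set.mem_setOf_eq, h2, pcount_perm, hσj]
    calc μ (F ⁻¹' S j) = Measure.map F μ (S j) := (Measure.map_apply hFmeas (hS j)).symm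
      _ = Measure.map (fun ω (k : Fin (B + 1)) => W (σ k) ω) μ (S j) := by rw [hexch σ]
      _ = μ ((fun ω (k : Fin (B + 1)) => W (σ k) ω) ⁻¹' (S j)) :=
          Measure.map_apply hGmeas (hS j)
      _ = μ (F ⁻¹' S 0) := by rw [h1]
  -- pointwise bound on the sum of indicators
  have hpt : ∀ ω, (∑ j : Fin (B + 1), (F ⁻¹' S j).indicator (1 : Ω → ℝ≥0∞) ω)
      ≤ ENNReal.ofReal c := by
    intro ω
    have hcard : (∑ j : Fin (B + 1), (F ⁻¹' S j).indicator (1 : Ω → ℝ≥0∞) ω)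
        = ((Finset.univ.filter fun j : Fin (B + 1) => ((pcount (F ω) j : ℝ) ≤ c)).card
            : ℝ≥0∞) := by
      rw [Finset.card_filter]
      push_cast
      apply Finset.sum_congr rfl
      intro j _
      by_cases h : (pcount (F ω) j : ℝ) ≤ c <;>
        simp [Set.indicator, h, hSdef]
    rw [hcard]
    have := pcount_bound (F ω) c hc0
    calc ((Finset.univ.filter fun j : Fin (B + 1) => ((pcount (F ω) j : ℝ) ≤ c)).card
          : ℝ≥0∞)
        = ENNReal.ofReal ((Finset.univ.filter fun j : Fin (B + 1) =>
            ((pcount (F ω) j : ℝ) ≤ c)).card : ℝ) := by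
          rw [ENNReal.ofReal_natCast]
      _ ≤ ENNReal.ofReal c := ENNReal.ofReal_le_ofReal this
  -- sum of measures bound
  have hsum : ∑ j : Fin (B + 1), μ (F ⁻¹' S j) ≤ ENNReal.ofReal c := by
    have heach : ∀ j : Fin (B + 1), μ (F ⁻¹' S j)
        = ∫⁻ ω, (F ⁻¹' S j).indicator (1 : Ω → ℝ≥0∞) ω ∂μ := by
      intro j
      rw [lintegral_indicator_one (hFmeas (hS j))]
    calc ∑ j : Fin (B + 1), μ (F ⁻¹' S j)
        = ∑ j : Fin (B + 1), ∫⁻ ω, (F ⁻¹' S j).indicator (1 : Ω → ℝ≥0∞) ω ∂μ := by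
          exact Finset.sum_congr rfl fun j _ => heach j
      _ = ∫⁻ ω, ∑ j : Fin (B + 1), (F ⁻¹' S j).indicator (1 : Ω → ℝ≥0∞) ω ∂μ := by
          refine (lintegral_finset_sum _ fun j _ => ?_).symm
          exact measurable_const.indicator (hFmeas (hS j))
      _ ≤ ∫⁻ _, ENNReal.ofReal c ∂μ := lintegral_mono hpt
      _ = ENNReal.ofReal c := by simp [lintegral_const]
  have hsum' : (B + 1 : ℝ≥0∞) * μ (F ⁻¹' S 0) ≤ ENNReal.ofReal c := by
    calc (B + 1 : ℝ≥0∞) * μ (F ⁻¹' S 0)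
        = ∑ _j : Fin (B + 1), μ (F ⁻¹' S 0) := by
          rw [Finset.sum_const, Finset.card_univ, Fintype.card_fin, nsmul_eq_mul]
          push_cast
          ring
      _ = ∑ j : Fin (B + 1), μ (F ⁻¹' S j) :=
          Finset.sum_congr rfl fun j _ => (hμeq j).symm
      _ ≤ ENNReal.ofReal c := hsum
  have hcofr : ENNReal.ofReal c = (B + 1 : ℝ≥0∞) * ENNReal.ofReal α := by
    rw [hc, mul_comm, ENNReal.ofReal_mul (by positivity)]
    congr 1
    rw [show ((B : ℝ) + 1) = ((B + 1 : ℕ) : ℝ) by push_cast; ring, ENNReal.ofReal_natCast]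
    push_cast
    ring
  rw [hcofr] at hsum'
  have hne0 : (B + 1 : ℝ≥0∞) ≠ 0 := by simp
  have hnetop : (B + 1 : ℝ≥0∞) ≠ ⊤ :=
    ENNReal.add_ne_top.mpr ⟨ENNReal.natCast_ne_top B, ENNReal.one_ne_top⟩
  exact (ENNReal.mul_le_mul_iff_right hne0 hnetop).mp hsum'
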